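/- (Kernel identity underlying the estimator identities.) For every Pauli string P_a on n qubits, the uniform average over the 6^n n-fold product Pauli eigenstates ρ satisfies the matrix identity 6^{-n} ∑_ρ tr(P_a * ρ) • ρ = 2^{-n} · (1/3)^{|a|} • P_a, where |a| is the number of indices j with a j ≠ 0. -/

import Mathlib

open Matrix Finset

noncomputable section

/-- The four single-qubit Pauli matrices: σ₀ = I, σ₁ = X, σ₂ = Y, σ₃ = Z. -/
def pauli : Fin 4 → Matrix (Fin 2) (Fin 2) ℂ
  | 0 => 1
  | 1 => !![0, 1; 1, 0]
  | 2 => !![0, -Complex.I; Complex.I, 0]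
  | 3 => !![1, 0; 0, -1]

/-- The `n`-qubit Pauli string `P_a = σ_{a 1} ⊗ ⋯ ⊗ σ_{a n}` (n-fold Kronecker product),
a `2^n × 2^n` complex matrix indexed by `Fin n → Fin 2`. -/
def PauliString {n : ℕ} (a : Fin n → Fin 4) :
    Matrix (Fin n → Fin 2) (Fin n → Fin 2) ℂ :=
  fun i k => ∏ j, pauli (a j) (i j) (k j)

/-- `⟨a,b⟩ ∈ {0,1}`: parity of the number of positions where `a` and `b` anticommute. -/
def ppair {n : ℕ} (a b : Fin n → Fin 4) : ℕ :=
  (Finset.univ.filter fun j => a j ≠ 0 ∧ b j ≠ 0 ∧ a j ≠ b j).card % 2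

/-- The weight `|a|` of a Pauli string: the number of non-identity tensor factors. -/
def pweight {n : ℕ} (a : Fin n → Fin 4) : ℕ :=
  (Finset.univ.filter fun j => a j ≠ 0).card

/-- The six single-qubit Pauli eigenstates `(I₂ + s•W)/2`, `s ∈ {1,-1}`, `W ∈ {X,Y,Z}`,
indexed by `Bool × Fin 3`. -/
def eigState : Bool × Fin 3 → Matrix (Fin 2) (Fin 2) ℂ :=
  fun q => (2⁻¹ : ℂ) • (1 + (if q.1 then (1 : ℂ) else -1) • pauli q.2.succ)

/-- The `6^n` n-fold product Pauli eigenstates `ρ₁ ⊗ ⋯ ⊗ ρ_n` with each `ρ_j ∈ S₁`. -/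
def prodEigState {n : ℕ} (f : Fin n → Bool × Fin 3) :
    Matrix (Fin n → Fin 2) (Fin n → Fin 2) ℂ :=
  fun i k => ∏ j, eigState (f j) (i j) (k j)

lemma eig_eq (s : Bool) (w : Fin 3) : eigState (s, w) =
    if s then
      if w = 0 then !![2⁻¹, 2⁻¹; 2⁻¹, 2⁻¹]
      else if w = 1 then !![2⁻¹, -(Complex.I/2); Complex.I/2, 2⁻¹]
      else !![1, 0; 0, 0]
    else
      if w = 0 then !![2⁻¹, -2⁻¹; -2⁻¹, 2⁻¹]
      else if w = 1 then !![2⁻¹, Complex.I/2; -(Complex.I/2), 2⁻¹]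
      else !![0, 0; 0, 1] := by
  have h0 : ((0:Fin 3).succ : Fin 4) = 1 := by decide
  have h1 : ((1:Fin 3).succ : Fin 4) = 2 := by decide
  have h2 : ((2:Fin 3).succ : Fin 4) = 3 := by decide
  fin_cases s <;> fin_cases w <;>
    · ext i j; fin_cases i <;> fin_cases j <;>
      simp [eigState, h0, h1, h2, pauli, Matrix.one_apply] <;> ring

set_option linter.unreachableTactic false in
set_option linter.unusedTactic false in
lemma single_kernel (b : Fin 4) (x y : Fin 2) :
    ∑ q : Bool × Fin 3, (pauli b * eigState q).trace * eigState q x y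
      = (if b = 0 then 3 else 1) * pauli b x y := by
  rw [Fintype.sum_prod_type]
  simp only [Fintype.sum_bool, Fin.sum_univ_three, eig_eq]
  fin_cases b <;> fin_cases x <;> fin_cases y <;>
    simp [pauli, Matrix.trace_fin_two, Matrix.mul_apply, Fin.sum_univ_two, Matrix.one_apply] <;>
    ring_nf <;>
    (try simp [Complex.I_sq,
      show Complex.I ^ (3:ℕ) = -Complex.I by rw [pow_succ, Complex.I_sq]; ring]) <;>
    (try ring)

lemma trace_factor {n : ℕ} (a : Fin n → Fin 4) (f : Fin n → Bool × Fin 3) :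
    (PauliString a * prodEigState f).trace
      = ∏ j, (pauli (a j) * eigState (f j)).trace := by
  have h : ∀ j, (pauli (a j) * eigState (f j)).trace
      = ∑ x : Fin 2, ∑ y : Fin 2, pauli (a j) x y * eigState (f j) y x := by
    intro j
    simp [Matrix.trace, Matrix.diag, Matrix.mul_apply]
  simp only [h, Matrix.trace, Matrix.diag, Matrix.mul_apply, PauliString, prodEigState]
  rw [show (∏ j, ∑ x : Fin 2, ∑ y : Fin 2, pauli (a j) x y * eigState (f j) y x)
      = ∑ i : Fin n → Fin 2, ∑ k : Fin n → Fin 2,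
          ∏ j, pauli (a j) (i j) (k j) * eigState (f j) (k j) (i j) by
    simp_rw [Finset.prod_univ_sum, Fintype.piFinset_univ]]
  simp_rw [Finset.prod_mul_distrib]

theorem eigenstate_kernel_identity {n : ℕ} (a : Fin n → Fin 4) :
    ((6 : ℂ) ^ n)⁻¹ • ∑ f : Fin n → Bool × Fin 3,
        (PauliString a * prodEigState f).trace • prodEigState f
      = (((2 : ℂ) ^ n)⁻¹ * (1 / 3 : ℂ) ^ pweight a) • PauliString a := by
  have key : ∀ (i k : Fin n → Fin 2),
      ∑ f : Fin n → Bool × Fin 3,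
          (PauliString a * prodEigState f).trace * prodEigState f i k
        = (3:ℂ) ^ (n - pweight a) * PauliString a i k := by
    intro i k
    calc ∑ f : Fin n → Bool × Fin 3,
            (PauliString a * prodEigState f).trace * prodEigState f i k
        = ∑ f : Fin n → Bool × Fin 3,
            ∏ j, (pauli (a j) * eigState (f j)).trace * eigState (f j) (i j) (k j) := by
          simp_rw [trace_factor, prodEigState, Finset.prod_mul_distrib]
      _ = ∏ j, ∑ q : Bool × Fin 3, (pauli (a j) * eigState q).trace * eigState q (i j) (k j) := by
          simp_rw [Finset.prod_univ_sum, Fintype.piFinset_univ]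
      _ = ∏ j, (if a j = 0 then (3:ℂ) else 1) * pauli (a j) (i j) (k j) := by
          simp_rw [single_kernel]
      _ = (∏ j, if a j = 0 then (3:ℂ) else 1) * ∏ j, pauli (a j) (i j) (k j) :=
          Finset.prod_mul_distrib
      _ = (3:ℂ) ^ (n - pweight a) * PauliString a i k := by
          congr 1
          rw [Finset.prod_ite, Finset.prod_const, Finset.prod_const, one_pow, mul_one]
          congr 1
          have h := Finset.card_filter_add_card_filter_not
            (s := (univ : Finset (Fin n))) (p := fun j => a j = 0)
          simp only [Finset.card_univ, Fintype.card_fin] at h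
          unfold pweight
          simp only [ne_eq] at h ⊢
          omega
  have hw : pweight a ≤ n := by
    simpa [pweight] using (Finset.card_filter_le (univ : Finset (Fin n)) fun j => a j ≠ 0)
  have hcoef : ((6 : ℂ) ^ n)⁻¹ * (3:ℂ) ^ (n - pweight a)
      = ((2 : ℂ) ^ n)⁻¹ * (1 / 3 : ℂ) ^ pweight a := by
    have h3 : (3:ℂ) ^ (n - pweight a) * 3 ^ pweight a = 3 ^ n := by
      rw [← pow_add]; congr 1; omega
    have h6 : (6:ℂ) ^ n = 2 ^ n * 3 ^ n := by rw [← mul_pow]; norm_num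
    rw [h6, one_div, inv_pow]
    have h2 : (2:ℂ) ^ n ≠ 0 := pow_ne_zero _ (by norm_num)
    have h3' : (3:ℂ) ^ pweight a ≠ 0 := pow_ne_zero _ (by norm_num)
    have h3n : (3:ℂ) ^ n ≠ 0 := pow_ne_zero _ (by norm_num)
    field_simp
    rw [← h3]
  ext i k
  simp only [Matrix.smul_apply, Finset.sum_apply, Matrix.sum_apply, smul_eq_mul]
  rw [key i k, ← mul_assoc, hcoef, mul_assoc]
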